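/- Let c : G → M be a cellular cover of an infinite group M. If the kernel K = ker c is a free abelian group, then |G| ≤ |M|. -/

import Mathlib

universe u

open scoped Pointwise

private lemma conj_aux {G : Type*} [Group G] (k h x : G) (hk : ∀ y, k * y = y * k) :
    (k * h) * x * (k * h)⁻¹ = h * x * h⁻¹ := by
  have h1 : (k * h) * x * (k * h)⁻¹ = k * (h * x * h⁻¹) * k⁻¹ := by group
  rw [h1, hk (h * x * h⁻¹), mul_inv_cancel_right]

private lemma conj_aux2 {G : Type*} [Group G] (h h₀ k : G) (hk : ∀ y, k * y = y * k) :
    h * (h₀ * k) * h⁻¹ = (h * h₀ * h⁻¹) * k := by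
  calc h * (h₀ * k) * h⁻¹ = h * h₀ * (k * h⁻¹) := by group
    _ = h * h₀ * (h⁻¹ * k) := by rw [hk]
    _ = (h * h₀ * h⁻¹) * k := by group

/-- Let `c : G → M` be a cellular cover of an infinite group `M`.  If the kernel
`K = ker c` is a free abelian group then `|G| ≤ |M|`. -/
theorem cellular_cover_free_abelian_kernel_card_le
    {G M : Type u} [Group G] [Group M] (c : G →* M)
    (hM : Infinite M)
    (hcell : Function.Bijective fun ψ : G →* G => c.comp ψ)
    -- the kernel is a free abelian group
    (hfree : ∃ (A : Type u) (_ : AddCommGroup A) (_ : Module.Free ℤ A),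
      Nonempty (c.ker ≃* Multiplicative A)) :
    Cardinal.mk G ≤ Cardinal.mk M := by
  classical
  obtain ⟨A, _, _, ⟨e⟩⟩ := hfree
  -- the kernel is central
  have hcent : ∀ k ∈ c.ker, ∀ x : G, k * x = x * k := by
    intro k hk x
    have h1 : (fun ψ : G →* G => c.comp ψ) (MulAut.conj k).toMonoidHom
        = (fun ψ : G →* G => c.comp ψ) (MonoidHom.id G) := by
      simp only
      ext g
      simp [MonoidHom.mem_ker.mp hk]
    have h2 := hcell.injective h1
    have h3 : k * x * k⁻¹ = x := by
      conv_rhs => rw [show x = (MonoidHom.id G) x from rfl, ← h2]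
      simp [MulAut.conj]
    calc k * x = k * x * k⁻¹ * k := by group
      _ = x * k := by rw [h3]
  -- Hom(G, ker c) = 0
  have hhom : ∀ f : G →* c.ker, ∀ g : G, (f g : G) = 1 := by
    intro f g
    have h1 : (fun ψ : G →* G => c.comp ψ) (c.ker.subtype.comp f)
        = (fun ψ : G →* G => c.comp ψ) (1 : G →* G) := by
      simp only
      ext x
      have := (f x).2
      simp_all [MonoidHom.mem_ker.mp this]
    have h2 := hcell.injective h1
    calc (f g : G) = (c.ker.subtype.comp f) g := rfl
      _ = (1 : G →* G) g := by rw [h2]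
      _ = 1 := rfl
  -- basis of the kernel
  set ι := Module.Free.ChooseBasisIndex ℤ A with hι
  let b : Module.Basis ι ℤ A := Module.Free.chooseBasis ℤ A
  let φ : c.ker → (ι →₀ ℤ) := fun k => b.repr (e k).toAdd
  have φbij : Function.Bijective φ := by
    refine (b.repr.toEquiv.bijective.comp ?_).comp e.bijective
    exact Multiplicative.toAdd.bijective
  have φmul : ∀ x y : c.ker, φ (x * y) = φ x + φ y := by
    intro x y
    simp only [φ, map_mul]
    rw [show ((e x) * (e y)).toAdd = (e x).toAdd + (e y).toAdd from rfl, map_add]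
  have φone : φ 1 = 0 := by
    simp only [φ, map_one]
    rw [show (1 : Multiplicative A).toAdd = 0 from rfl, map_zero]
  have φinv : ∀ x : c.ker, φ x⁻¹ = -φ x := by
    intro x
    have h := φmul x x⁻¹
    rw [mul_inv_cancel, φone] at h
    exact eq_neg_of_add_eq_zero_right h.symm
  have hMinf : Cardinal.aleph0 ≤ Cardinal.mk M := Cardinal.aleph0_le_mk M
  have hkercard : Cardinal.mk c.ker = Cardinal.mk (ι →₀ ℤ) :=
    Cardinal.mk_congr (Equiv.ofBijective φ φbij)
  have hquot : Cardinal.mk (G ⧸ c.ker) ≤ Cardinal.mk M := by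
    rw [Cardinal.mk_congr (QuotientGroup.quotientKerEquivRange c).toEquiv]
    exact Cardinal.mk_le_of_injective (Subtype.val_injective)
  suffices hK : Cardinal.mk c.ker ≤ Cardinal.mk M by
    calc Cardinal.mk G = Cardinal.mk ((G ⧸ c.ker) × c.ker) :=
          Cardinal.mk_congr Subgroup.groupEquivQuotientProdSubgroup
      _ = Cardinal.mk (G ⧸ c.ker) * Cardinal.mk c.ker := by
          rw [Cardinal.mk_prod, Cardinal.lift_id, Cardinal.lift_id]
      _ ≤ Cardinal.mk M * Cardinal.mk M := mul_le_mul' hquot hK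
      _ = Cardinal.mk M := Cardinal.mul_eq_self hMinf
  rw [hkercard]
  rcases le_or_gt (Cardinal.mk ι) (Cardinal.mk M) with hsmall | hbig
  · -- small rank case
    rcases isEmpty_or_nonempty ι with h | h
    · haveI : Unique (ι →₀ ℤ) := inferInstance
      rw [Cardinal.mk_eq_one]
      exact le_trans Cardinal.one_le_aleph0 hMinf
    · rw [Cardinal.mk_finsupp_lift_of_infinite']
      simp only [Cardinal.mk_int, Cardinal.lift_aleph0, Cardinal.lift_uzero]
      exact max_le hsmall hMinf
  · -- large rank case: derive a contradiction
    exfalso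
    let ψ : (ι →₀ ℤ) → c.ker := (Equiv.ofBijective φ φbij).symm
    have φψ : ∀ a, φ (ψ a) = a := fun a => (Equiv.ofBijective φ φbij).apply_symm_apply a
    set R : Set G := Set.range (fun q : G ⧸ c.ker => Quotient.out q) with hR
    set H : Subgroup G := Subgroup.closure R with hH
    have houtmem : ∀ g : G, (QuotientGroup.mk g : G ⧸ c.ker).out ∈ H :=
      fun g => Subgroup.subset_closure (Set.mem_range_self _)
    have houtker : ∀ g : G, ((QuotientGroup.mk g : G ⧸ c.ker).out)⁻¹ * g ∈ c.ker := by
      intro g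
      rw [← QuotientGroup.eq]
      exact QuotientGroup.out_eq' _
    have hHcard : Cardinal.mk H ≤ Cardinal.mk M := by
      haveI : Nonempty R := ⟨⟨Quotient.out (1 : G ⧸ c.ker), Set.mem_range_self _⟩⟩
      have h2 : H = (FreeGroup.lift (Subtype.val : R → G)).range := by
        rw [FreeGroup.range_lift_eq_closure, Subtype.range_coe]
      have h3 : Cardinal.mk H ≤ Cardinal.mk (FreeGroup R) := by
        rw [h2]
        exact Cardinal.mk_le_of_surjective (FreeGroup.lift _).rangeRestrict_surjective
      refine h3.trans ?_
      rw [Cardinal.mk_freeGroup]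
      exact max_le (Cardinal.mk_range_le.trans hquot) hMinf
    set S : Subgroup G := H ⊓ c.ker with hS
    have hScard : Cardinal.mk S ≤ Cardinal.mk M :=
      (Cardinal.mk_le_mk_of_subset (show (S : Set G) ⊆ (H : Set G) from
        SetLike.coe_subset_coe.mpr inf_le_left)).trans hHcard
    set B₁ : Set ι :=
      ⋃ s : S, (((φ ⟨s.1, (Subgroup.mem_inf.mp s.2).2⟩).support : Finset ι) : Set ι) with hB₁
    have hB1card : Cardinal.mk B₁ ≤ Cardinal.mk M := by
      refine (Cardinal.mk_iUnion_le _).trans ?_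
      have h1 : (⨆ s : S, Cardinal.mk
          ((((φ ⟨s.1, (Subgroup.mem_inf.mp s.2).2⟩).support : Finset ι) : Set ι)))
          ≤ Cardinal.aleph0 := ciSup_le' fun s => Cardinal.mk_le_aleph0
      calc Cardinal.mk S * _ ≤ Cardinal.mk M * Cardinal.aleph0 := mul_le_mul' hScard h1
        _ ≤ Cardinal.mk M * Cardinal.mk M := mul_le_mul' le_rfl hMinf
        _ = Cardinal.mk M := Cardinal.mul_eq_self hMinf
    obtain ⟨j, hj⟩ : ∃ j : ι, j ∉ B₁ := by
      by_contra hcon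
      push_neg at hcon
      have huniv : B₁ = Set.univ := Set.eq_univ_of_forall hcon
      rw [huniv, Cardinal.mk_univ] at hB1card
      exact absurd hB1card hbig.not_ge
    -- the two complementary parts of the kernel
    let K₁' : Subgroup c.ker :=
      { carrier := {k | ∀ i ∉ B₁, φ k i = 0}
        one_mem' := by intro i _; rw [φone]; rfl
        mul_mem' := by
          intro a b ha hb i hi
          rw [φmul, Finsupp.add_apply, ha i hi, hb i hi, add_zero]
        inv_mem' := by
          intro a ha i hi
          rw [φinv, Finsupp.neg_apply, ha i hi, neg_zero] }
    let K₂' : Subgroup c.ker :=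
      { carrier := {k | ∀ i ∈ B₁, φ k i = 0}
        one_mem' := by intro i _; rw [φone]; rfl
        mul_mem' := by
          intro a b ha hb i hi
          rw [φmul, Finsupp.add_apply, ha i hi, hb i hi, add_zero]
        inv_mem' := by
          intro a ha i hi
          rw [φinv, Finsupp.neg_apply, ha i hi, neg_zero] }
    set K₁ : Subgroup G := Subgroup.map c.ker.subtype K₁' with hK₁
    set K₂ : Subgroup G := Subgroup.map c.ker.subtype K₂' with hK₂
    have hK1le : K₁ ≤ c.ker := Subgroup.map_subtype_le _
    have hK2le : K₂ ≤ c.ker := Subgroup.map_subtype_le _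
    have hK12 : ∀ g : G, g ∈ K₁ → g ∈ K₂ → g = 1 := by
      intro g hg1 hg2
      obtain ⟨k, hk, rfl⟩ := Subgroup.mem_map.mp hg1
      obtain ⟨k', hk', hkk'⟩ := Subgroup.mem_map.mp hg2
      have hkeq : k' = k := Subtype.ext hkk'
      rw [hkeq] at hk'
      have : φ k = 0 := by
        ext i
        by_cases hiB : i ∈ B₁
        · exact hk' i hiB
        · exact hk i hiB
      have hk1 : k = 1 := φbij.injective (by rw [this, φone])
      rw [hk1]; rfl
    have hSK1 : ∀ g ∈ S, g ∈ K₁ := by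
      intro g hg
      have hker := (Subgroup.mem_inf.mp hg).2
      refine Subgroup.mem_map.mpr ⟨⟨g, hker⟩, ?_, rfl⟩
      intro i hi
      by_contra hne
      refine hi (Set.mem_iUnion.mpr ⟨⟨g, hg⟩, ?_⟩)
      simpa using Finsupp.mem_support_iff.mpr hne
    haveI hK1norm : K₁.Normal := by
      constructor
      intro n hn g
      have h := hcent n (hK1le hn) g
      have heq : g * n * g⁻¹ = n := by rw [← h, mul_inv_cancel_right]
      rw [heq]; exact hn
    -- H ⊔ K₁ is normal
    haveI hH'norm : (H ⊔ K₁).Normal := by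
      constructor
      intro n hn g
      have hn' : n ∈ ((H : Set G) * (K₁ : Set G)) := by
        rw [← Subgroup.mul_normal H K₁]; exact hn
      obtain ⟨h₀, hh₀, k₁, hk₁, rfl⟩ := Set.mem_mul.mp hn'
      have hk0 : ((QuotientGroup.mk g : G ⧸ c.ker).out)⁻¹ * g ∈ c.ker := houtker g
      set h : G := (QuotientGroup.mk g : G ⧸ c.ker).out with hhdef
      set k0 : G := h⁻¹ * g with hk0def
      have hgeq : g = k0 * h := by
        rw [hcent k0 hk0 h, hk0def, mul_inv_cancel_left]
      have e1 : g * (h₀ * k₁) * g⁻¹ = h * (h₀ * k₁) * h⁻¹ := by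
        rw [hgeq]; exact conj_aux k0 h _ (hcent k0 hk0)
      have e2 : h * (h₀ * k₁) * h⁻¹ = (h * h₀ * h⁻¹) * k₁ :=
        conj_aux2 h h₀ k₁ (hcent k₁ (hK1le hk₁))
      rw [e1, e2]
      exact mul_mem
        (Subgroup.mem_sup_left (mul_mem (mul_mem (houtmem g) hh₀) (inv_mem (houtmem g))))
        (Subgroup.mem_sup_right hk₁)
    -- (H ⊔ K₁) ∩ K₂ is trivial
    have hH'K2 : ∀ x : G, x ∈ H ⊔ K₁ → x ∈ K₂ → x = 1 := by
      intro x hx hx2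
      have hx' : x ∈ ((H : Set G) * (K₁ : Set G)) := by
        rw [← Subgroup.mul_normal H K₁]; exact hx
      obtain ⟨h₀, hh₀, k₁, hk₁, rfl⟩ := Set.mem_mul.mp hx'
      have hker : h₀ ∈ c.ker := by
        have hrw : h₀ = (h₀ * k₁) * k₁⁻¹ := by group
        rw [hrw]
        exact mul_mem (hK2le hx2) (inv_mem (hK1le hk₁))
      have hS0 : h₀ ∈ S := Subgroup.mem_inf.mpr ⟨hh₀, hker⟩
      exact hK12 _ (mul_mem (hSK1 _ hS0) hk₁) hx2
    -- decomposition G = (H ⊔ K₁) * K₂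
    have hdec : ∀ g : G, ∃ w ∈ H ⊔ K₁, ∃ k ∈ K₂, g = w * k := by
      intro g
      have hk0 : ((QuotientGroup.mk g : G ⧸ c.ker).out)⁻¹ * g ∈ c.ker := houtker g
      set h : G := (QuotientGroup.mk g : G ⧸ c.ker).out with hhdef
      set a : ι →₀ ℤ := φ ⟨h⁻¹ * g, hk0⟩ with ha
      set k₁ : c.ker := ψ (a.filter (· ∈ B₁)) with hk₁def
      set k₂ : c.ker := ψ (a.filter (fun i => i ∉ B₁)) with hk₂def
      have hφ1 : φ k₁ = a.filter (· ∈ B₁) := φψ _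
      have hφ2 : φ k₂ = a.filter (fun i => i ∉ B₁) := φψ _
      have hmul : k₁ * k₂ = ⟨h⁻¹ * g, hk0⟩ := by
        apply φbij.injective
        rw [φmul, hφ1, hφ2, ← ha, Finsupp.filter_pos_add_filter_neg]
      have hk₁K : (k₁ : G) ∈ K₁ := by
        refine Subgroup.mem_map.mpr ⟨k₁, ?_, rfl⟩
        intro i hi
        rw [hφ1, Finsupp.filter_apply, if_neg hi]
      have hk₂K : (k₂ : G) ∈ K₂ := by
        refine Subgroup.mem_map.mpr ⟨k₂, ?_, rfl⟩
        intro i hi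
        rw [hφ2, Finsupp.filter_apply, if_neg (fun hn => hn hi)]
      refine ⟨h * k₁, mul_mem (Subgroup.mem_sup_left (houtmem g))
        (Subgroup.mem_sup_right hk₁K), k₂, hk₂K, ?_⟩
      have hval : (k₁ : G) * (k₂ : G) = h⁻¹ * g := congrArg Subtype.val hmul
      calc g = h * (h⁻¹ * g) := by group
        _ = h * ((k₁ : G) * (k₂ : G)) := by rw [← hval]
        _ = (h * (k₁ : G)) * (k₂ : G) := by group
    -- the monoid hom K₂ → G ⧸ (H ⊔ K₁) is bijective
    let β : K₂ →* G ⧸ (H ⊔ K₁) := (QuotientGroup.mk' (H ⊔ K₁)).comp K₂.subtype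
    have hβinj : Function.Injective β := by
      rw [injective_iff_map_eq_one]
      intro a ha
      have hmem : (a : G) ∈ H ⊔ K₁ := (QuotientGroup.eq_one_iff _).mp ha
      exact Subtype.ext (hH'K2 _ hmem a.2)
    have hβsurj : Function.Surjective β := by
      intro q
      obtain ⟨g, rfl⟩ := QuotientGroup.mk'_surjective (H ⊔ K₁) q
      obtain ⟨w, hw, k, hk, rfl⟩ := hdec g
      refine ⟨⟨k, hk⟩, ?_⟩
      show (QuotientGroup.mk' (H ⊔ K₁)) k = (QuotientGroup.mk' (H ⊔ K₁)) (w * k)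
      have hw1 : (QuotientGroup.mk' (H ⊔ K₁)) w = 1 := (QuotientGroup.eq_one_iff w).mpr hw
      rw [map_mul, hw1, one_mul]
    let iso : K₂ ≃* G ⧸ (H ⊔ K₁) := MulEquiv.ofBijective β ⟨hβinj, hβsurj⟩
    let θ : G →* c.ker :=
      ((Subgroup.inclusion hK2le).comp iso.symm.toMonoidHom).comp (QuotientGroup.mk' (H ⊔ K₁))
    -- the element contradicting Hom(G, ker c) = 0
    set x : c.ker := ψ (Finsupp.single j 1) with hxdef
    have hφx : φ x = Finsupp.single j 1 := φψ _
    have hxK2 : (x : G) ∈ K₂ := by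
      refine Subgroup.mem_map.mpr ⟨x, ?_, rfl⟩
      intro i hi
      rw [hφx]
      exact Finsupp.single_eq_of_ne (fun hji => hj (hji ▸ hi))
    have h1 : iso ⟨(x : G), hxK2⟩ = (QuotientGroup.mk' (H ⊔ K₁)) (x : G) := rfl
    have h2 : iso.symm ((QuotientGroup.mk' (H ⊔ K₁)) (x : G)) = ⟨(x : G), hxK2⟩ := by
      rw [← h1, MulEquiv.symm_apply_apply]
    have h3 : ((θ (x : G) : c.ker) : G) = (x : G) := by
      show (((Subgroup.inclusion hK2le)
        (iso.symm ((QuotientGroup.mk' (H ⊔ K₁)) (x : G)))) : G) = (x : G)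
      rw [h2]
      rfl
    rw [hhom θ (x : G)] at h3
    have hx1 : x = 1 := by
      rw [← OneMemClass.coe_eq_one]
      exact h3.symm
    have : (Finsupp.single j 1 : ι →₀ ℤ) j = (0 : ι →₀ ℤ) j := by
      rw [← hφx, hx1, φone]
    rw [Finsupp.single_eq_same, Finsupp.coe_zero, Pi.zero_apply] at this
    exact one_ne_zero this
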